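/- Suppose the convex hull of vectors b_1, ..., b_{n+1} in R^n contains the origin, and the enlarged system {b_0, b_1, ..., b_{n+1}} is nondegenerate, meaning every n of its vectors are linearly independent. Then there exists a unique index s in {1, ..., n+1} such that the convex hull of the vectors obtained by replacing b_s with b_0 contains the origin. -/

import Mathlib

/-- A finite system of vectors in `ℝ^n` is nondegenerate if every `n` of its vectors
are linearly independent. -/
def Nondegenerate {m n : ℕ} (c : Fin m → EuclideanSpace ℝ (Fin n)) : Prop :=
  ∀ S : Finset (Fin m), S.card = n → LinearIndependent ℝ (fun i : S => c i)

open Finset in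
theorem myhull {ι : Type*} [Fintype ι] [DecidableEq ι] {V : Type*} [AddCommGroup V]
    [Module ℝ V] (v : ι → V) (x : V) :
    x ∈ convexHull ℝ (Set.range v) ↔
      ∃ w : ι → ℝ, (∀ i, 0 ≤ w i) ∧ ∑ i, w i = 1 ∧ ∑ i, w i • v i = x := by
  rw [convexHull_range_eq_exists_affineCombination]
  constructor
  · rintro ⟨s, w, hw0, hw1, hx⟩
    refine ⟨fun i => if i ∈ s then w i else 0,
      fun i => by by_cases hi : i ∈ s <;> simp [hi, hw0 i], ?_, ?_⟩
    · rw [Finset.sum_ite_mem, Finset.univ_inter, hw1]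
    · rw [← hx, s.affineCombination_eq_linear_combination v w hw1]
      simp only [ite_smul, zero_smul, Finset.sum_ite_mem, Finset.univ_inter]
  · rintro ⟨w, hw0, hw1, hx⟩
    exact ⟨Finset.univ, w, fun i _ => hw0 i, hw1,
      by rw [Finset.univ.affineCombination_eq_linear_combination v w hw1]; exact hx⟩

theorem replacement_unique (n : ℕ) (b : Fin (n + 1) → EuclideanSpace ℝ (Fin n))
    (b0 : EuclideanSpace ℝ (Fin n))
    (h : (0 : EuclideanSpace ℝ (Fin n)) ∈ convexHull ℝ (Set.range b))
    (hnd : Nondegenerate (Fin.cons b0 b : Fin (n + 2) → EuclideanSpace ℝ (Fin n))) :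
    ∃! s : Fin (n + 1),
      (0 : EuclideanSpace ℝ (Fin n)) ∈ convexHull ℝ (Set.range (Function.update b s b0)) := by
  classical
  obtain ⟨l, hl0, hl1, hlb⟩ := (myhull b 0).1 h
  -- kernel lemma: a linear relation vanishing somewhere is trivial
  have K0 : ∀ (ρ : Fin (n+1) → ℝ) (s : Fin (n+1)), ∑ i, ρ i • b i = 0 → ρ s = 0 → ρ = 0 := by
    intro ρ s hsum hρs
    set S : Finset (Fin (n+2)) :=
      (Finset.univ.erase s).map ⟨Fin.succ, Fin.succ_injective _⟩ with hS
    have hcard : S.card = n := by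
      simp [hS, Finset.card_erase_of_mem]
    have li := hnd S hcard
    set G : Fin (n+2) → ℝ := Fin.cases 0 ρ with hG
    have hsum2 : ∑ x : S, G x • (Fin.cons b0 b : Fin (n+2) → _) x = 0 := by
      rw [Finset.sum_coe_sort S (fun y => G y • (Fin.cons b0 b : Fin (n+2) → _) y)]
      rw [hS, Finset.sum_map]
      simp only [Function.Embedding.coeFn_mk, hG, Fin.cases_succ, Fin.cons_succ]
      rw [Finset.sum_erase _ (by rw [hρs, zero_smul])]
      exact hlb ▸ hsum
    have hall := Fintype.linearIndependent_iff.1 li (fun x => G x) hsum2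
    funext i
    by_cases hi : i = s
    · rw [hi]; exact hρs
    · have := hall ⟨i.succ, by simp [hS, hi]⟩
      simpa [hG] using this
  have hlpos : ∀ i, 0 < l i := by
    intro i
    rcases lt_or_eq_of_le (hl0 i) with h' | h'
    · exact h'
    · exfalso
      have := K0 l i hlb h'.symm
      rw [this] at hl1
      simp at hl1
  have K1 : ∀ (ν : Fin (n+1) → ℝ), ∑ i, ν i • b i = 0 →
      ∀ s, ν = fun i => (ν s / l s) * l i := by
    intro ν hν s
    have := K0 (fun i => ν i - (ν s / l s) * l i) s ?_ ?_
    · funext i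
      have := congrFun this i
      simpa [sub_eq_zero] using this
    · simp only [sub_smul, Finset.sum_sub_distrib, hν, mul_smul]
      rw [← Finset.smul_sum, hlb, smul_zero, sub_zero]
    · show ν s - ν s / l s * l s = 0
      rw [div_mul_cancel₀ _ (ne_of_gt (hlpos s)), sub_self]
  -- b0 is a linear combination of the b i
  obtain ⟨c, hc⟩ : ∃ c : Fin (n+1) → ℝ, ∑ i, c i • b i = b0 := by
    rw [← Submodule.mem_span_range_iff_exists_fun ℝ]
    have hli : LinearIndependent ℝ (fun j : Fin n => b j.castSucc) := by
      set S : Finset (Fin (n+2)) :=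
        Finset.univ.map ⟨fun j : Fin n => (j.castSucc.succ : Fin (n+2)),
          fun a b hab => by
            simpa using hab⟩ with hS
      have hcard : S.card = n := by simp [hS]
      have li := hnd S hcard
      have := li.comp (fun j : Fin n => (⟨j.castSucc.succ, by simp [hS]; exact ⟨j, rfl⟩⟩ : S))
        (fun a b hab => by
          simp only [Subtype.mk.injEq, Fin.succ_inj] at hab
          exact Fin.castSucc_injective _ hab)
      exact this
    have h1 : Module.finrank ℝ (Submodule.span ℝ (Set.range fun j : Fin n => b j.castSucc)) = n := by
      rw [finrank_span_eq_card hli]; simp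
    have hsub : Submodule.span ℝ (Set.range fun j : Fin n => b j.castSucc) ≤
        Submodule.span ℝ (Set.range b) := by
      apply Submodule.span_mono
      rintro x ⟨j, rfl⟩
      exact ⟨j.castSucc, rfl⟩
    have h2 : Module.finrank ℝ (Submodule.span ℝ (Set.range b)) = n :=
      le_antisymm (le_trans (Submodule.finrank_le _) (by simp))
        (le_trans (le_of_eq h1.symm) (Submodule.finrank_mono hsub))
    have : Submodule.span ℝ (Set.range b) = ⊤ :=
      Submodule.eq_top_of_finrank_eq (by rw [h2]; simp)
    rw [this]
    trivial
  set r : Fin (n+1) → ℝ := fun i => c i / l i with hr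
  -- key nondegeneracy consequence
  have keyA : ∀ s i : Fin (n+1), s ≠ i → ∀ t : ℝ, c s = t * l s → c i = t * l i → False := by
    intro s i hsi t hcs hci
    rcases Nat.eq_zero_or_pos n with rfl | hn1
    · exact hsi (Fin.ext (by have h1 := s.isLt; have h2 := i.isLt; omega))
    set d : Fin (n+1) → ℝ := fun j => c j - t * l j with hd
    have hds : d s = 0 := by simp [hd, hcs]
    have hdi : d i = 0 := by simp [hd, hci]
    have hdsum : ∑ j, d j • b j = b0 := by
      simp only [hd, sub_smul, Finset.sum_sub_distrib, hc, mul_smul]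
      rw [← Finset.smul_sum, hlb, smul_zero, sub_zero]
    set T : Finset (Fin (n+1)) := (Finset.univ.erase s).erase i with hT
    set S : Finset (Fin (n+2)) := insert 0 (T.map ⟨Fin.succ, Fin.succ_injective _⟩) with hS
    have h0S : (0 : Fin (n+2)) ∉ T.map ⟨Fin.succ, Fin.succ_injective _⟩ := by
      simp [Fin.succ_ne_zero]
    have hcard : S.card = n := by
      have h1 : i ∈ Finset.univ.erase s :=
        Finset.mem_erase.2 ⟨hsi.symm, Finset.mem_univ i⟩
      rw [hS, Finset.card_insert_of_notMem h0S, Finset.card_map, hT,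
        Finset.card_erase_of_mem h1, Finset.card_erase_of_mem (Finset.mem_univ s),
        Finset.card_univ, Fintype.card_fin]
      omega
    have li := hnd S hcard
    set G : Fin (n+2) → ℝ := Fin.cases 1 (fun j => -(d j)) with hG
    have hsum2 : ∑ x : S, G x • (Fin.cons b0 b : Fin (n+2) → _) x = 0 := by
      rw [Finset.sum_coe_sort S (fun y => G y • (Fin.cons b0 b : Fin (n+2) → _) y), hS,
        Finset.sum_insert h0S, Finset.sum_map]
      simp only [Function.Embedding.coeFn_mk, hG, Fin.cases_succ, Fin.cases_zero,
        Fin.cons_succ, Fin.cons_zero, one_smul]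
      rw [hT, Finset.sum_erase _ (by rw [hdi, neg_zero, zero_smul]),
        Finset.sum_erase _ (by rw [hds, neg_zero, zero_smul])]
      simp only [neg_smul, Finset.sum_neg_distrib]
      rw [hdsum, add_neg_cancel]
    have hall := Fintype.linearIndependent_iff.1 li (fun x => G x) hsum2
    have h10 := hall ⟨0, Finset.mem_insert_self _ _⟩
    simp [hG] at h10
  have main : ∀ s, ((0 : EuclideanSpace ℝ (Fin n)) ∈
      convexHull ℝ (Set.range (Function.update b s b0))) ↔ ∀ i, r i ≤ r s := by
    intro s
    rw [myhull]
    constructor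
    · rintro ⟨w, hw0, hw1, hws⟩
      set ν : Fin (n+1) → ℝ := fun i => w s * c i + (if i = s then 0 else w i) with hνd
      have husum : ∀ (f : Fin (n+1) → ℝ) (v : Fin (n+1) → EuclideanSpace ℝ (Fin n)),
          ∑ i, f i • v i = f s • v s + ∑ i ∈ Finset.univ.erase s, f i • v i :=
        fun f v => (Finset.add_sum_erase _ _ (Finset.mem_univ s)).symm
      have hν : ∑ i, ν i • b i = 0 := by
        have e1 : ∑ i, ν i • b i
            = w s • b0 + ∑ i ∈ Finset.univ.erase s, w i • b i := by
          simp only [hνd, add_smul, Finset.sum_add_distrib]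
          congr 1
          · simp only [mul_smul, ← Finset.smul_sum, hc]
          · rw [husum (fun i => if i = s then 0 else w i) b]
            rw [if_pos rfl, zero_smul, zero_add]
            apply Finset.sum_congr rfl
            intro j hj
            rw [if_neg (Finset.mem_erase.1 hj).1]
        rw [e1, ← hws, husum w (Function.update b s b0), Function.update_self]
        congr 1
        apply Finset.sum_congr rfl
        intro j hj
        rw [Function.update_of_ne (Finset.mem_erase.1 hj).1]
      have hνs : ν s = w s * c s := by simp [hνd]
      have hK := K1 ν hν s
      have hwspos : 0 < w s := by
        rcases lt_or_eq_of_le (hw0 s) with h' | h'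
        · exact h'
        · exfalso
          have hν0 : ν s = 0 := by rw [hνs, ← h', zero_mul]
          have : ∀ j, ν j = 0 := by
            intro j
            rw [congrFun hK j, hν0, zero_div, zero_mul]
          have hwz : ∀ j, w j = 0 := by
            intro j
            by_cases hj : j = s
            · rw [hj, ← h']
            · have := this j
              simpa [hνd, hj, ← h'] using this
          rw [Finset.sum_congr rfl (fun j _ => hwz j)] at hw1
          simp at hw1
      intro i
      by_cases hi : i = s
      · rw [hi]
      set t : ℝ := ν s / l s with ht
      have hts : t * l s = w s * c s := by
        rw [← hνs]; exact (congrFun hK s).symm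
      have hνi : ν i = w s * c i + w i := by simp [hνd, hi]
      have hKi : w s * c i + w i = t * l i := by
        rw [← hνi]; exact congrFun hK i
      have hwi := hw0 i
      rw [hr]
      show c i / l i ≤ c s / l s
      rw [div_le_div_iff₀ (hlpos i) (hlpos s)]
      have hts2 : t * l s * l i = w s * c s * l i := by rw [hts]
      have hint1 : w s * c i * l s ≤ t * l i * l s :=
        mul_le_mul_of_nonneg_right (by linarith) (hlpos s).le
      refine le_of_mul_le_mul_left ?_ hwspos
      nlinarith [hint1, hts2]
    · intro hrs
      set q : Fin (n+1) → ℝ := fun i => c s / l s * l i - c i with hq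
      have hq0 : ∀ i, 0 ≤ q i := by
        intro i
        have := hrs i
        rw [hr] at this
        have h2 : c i / l i ≤ c s / l s := this
        rw [div_le_div_iff₀ (hlpos i) (hlpos s)] at h2
        have els : c s / l s * l s = c s := div_mul_cancel₀ _ (ne_of_gt (hlpos s))
        simp only [hq]
        nlinarith [hlpos i, hlpos s]
      have hqs : q s = 0 := by
        simp only [hq]
        rw [div_mul_cancel₀ _ (ne_of_gt (hlpos s)), sub_self]
      have hqsum : ∑ i, q i • b i = -b0 := by
        simp only [hq, sub_smul, Finset.sum_sub_distrib, hc, mul_smul]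
        rw [← Finset.smul_sum, hlb, smul_zero, zero_sub]
      set A : ℝ := 1 + ∑ i, q i with hA
      have hApos : 0 < A := by
        have : 0 ≤ ∑ i, q i := Finset.sum_nonneg (fun i _ => hq0 i)
        rw [hA]; linarith
      refine ⟨fun i => if i = s then 1/A else q i / A, ?_, ?_, ?_⟩
      · intro i
        show (0:ℝ) ≤ if i = s then 1/A else q i / A
        by_cases hi : i = s
        · rw [if_pos hi]; positivity
        · rw [if_neg hi]; exact div_nonneg (hq0 i) (le_of_lt hApos)
      · show ∑ i, (if i = s then 1/A else q i / A) = 1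
        rw [← Finset.add_sum_erase _ _ (Finset.mem_univ s), if_pos rfl]
        rw [Finset.sum_congr rfl (fun j hj => by rw [if_neg (Finset.mem_erase.1 hj).1])]
        rw [Finset.sum_erase _ (by rw [hqs, zero_div]), ← Finset.sum_div]
        rw [← add_div, ← hA]
        exact div_self (ne_of_gt hApos)
      · show ∑ i, (if i = s then 1/A else q i / A) • Function.update b s b0 i = 0
        rw [← Finset.add_sum_erase _ _ (Finset.mem_univ s), if_pos rfl,
          Function.update_self]
        rw [Finset.sum_congr rfl (fun j hj => by
          rw [if_neg (Finset.mem_erase.1 hj).1,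
            Function.update_of_ne (Finset.mem_erase.1 hj).1])]
        rw [Finset.sum_erase _ (by rw [hqs, zero_div, zero_smul])]
        have e2 : ∑ i, (q i / A) • b i = (1/A) • ∑ i, q i • b i := by
          rw [Finset.smul_sum]
          refine Finset.sum_congr rfl fun j _ => ?_
          rw [smul_smul, one_div_mul_eq_div]
        rw [e2, hqsum, smul_neg, add_neg_cancel]
  obtain ⟨s, hs⟩ := Finite.exists_max r
  refine ⟨s, (main s).2 hs, fun s' hs' => ?_⟩
  by_contra hne
  have hrs' := (main s').1 hs'
  have heq : r s = r s' := le_antisymm (hrs' s) (hs s')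
  refine keyA s' s hne (r s) ?_ ?_
  · rw [heq]; simp only [hr]
    exact (div_mul_cancel₀ _ (ne_of_gt (hlpos s'))).symm
  · simp only [hr]
    exact (div_mul_cancel₀ _ (ne_of_gt (hlpos s))).symm
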